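/- Let v be a vertex of the trellis with depth(v) ≥ 1 and suppose α^(0)(u) ≠ 0 for all vertices u. Define the forward mean ᾱ(u) = α^(1)(u)/α^(0)(u). Then ᾱ(v) = Σ_{e : fin(e) = v} (ᾱ(init(e)) + g(e)) · ( λ(e)·α^(0)(init(e)) / Σ_{e' : fin(e') = v} λ(e')·α^(0)(init(e')) ), i.e. the forward mean at v is the weighted average of the shifted incoming forward means, weighted by the relative flows of the incoming edges. (Mean-value joining formula, Appendix B of the paper.) -/

import Mathlib

open Finset

/-- `IsPath einit efin u v P` means the list of edges `P = e₁⋯e_L` is a path from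
vertex `u` to vertex `v`: `init e₁ = u`, `fin e_L = v` and `fin e_j = init e_{j+1}`;
the empty list is a path from every vertex to itself. -/
def IsPath {V E : Type*} (einit efin : E → V) : V → V → List E → Prop
  | u, v, [] => u = v
  | u, v, e :: es => einit e = u ∧ IsPath einit efin (efin e) v es

/-- The λ-label of a path: the product of the λ-labels of its edges. -/
noncomputable def pathLam {E : Type*} (lam : E → ℝ) (P : List E) : ℝ :=
  (P.map lam).prod

/-- The value `f(P)` of a path: the sum of the values `g(e)` of its edges. -/
noncomputable def pathF {E : Type*} (g : E → ℝ) (P : List E) : ℝ :=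
  (P.map g).sum

/-- The `m`-th forward numerator `α^(m)(v) = Σ_{P : A → v} f(P)^m · λ(P)`. -/
noncomputable def alphaNum {V E : Type*} (lam g : E → ℝ)
    (paths : V → V → Finset (List E)) (A : V) (m : ℕ) (v : V) : ℝ :=
  ∑ P ∈ paths A v, pathF g P ^ m * pathLam lam P

/-- The `m`-th backward numerator `β^(m)(v) = Σ_{P : v → B} f(P)^m · λ(P)`. -/
noncomputable def betaNum {V E : Type*} (lam g : E → ℝ)
    (paths : V → V → Finset (List E)) (B : V) (m : ℕ) (v : V) : ℝ :=
  ∑ P ∈ paths v B, pathF g P ^ m * pathLam lam P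

lemma isPath_append_singleton {V E : Type*} (einit efin : E → V) (u v : V) (Q : List E) (e : E) :
    IsPath einit efin u v (Q ++ [e]) ↔ IsPath einit efin u (einit e) Q ∧ efin e = v := by
  induction Q generalizing u with
  | nil => simp [IsPath, eq_comm]
  | cons a as ih => simp [IsPath, ih, and_assoc]

lemma sum_paths_split {V E : Type*} [Fintype E] [DecidableEq V]
    (einit efin : E → V) (depth : V → ℕ)
    (hdepth : ∀ e, depth (efin e) = depth (einit e) + 1)
    (A : V) (hA : depth A = 0)
    (paths : V → V → Finset (List E))
    (hpaths : ∀ u v P, P ∈ paths u v ↔ IsPath einit efin u v P)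
    (v : V) (hv : 1 ≤ depth v) (F : List E → ℝ) :
    ∑ P ∈ paths A v, F P =
      ∑ e ∈ Finset.univ.filter (fun e => efin e = v), ∑ Q ∈ paths A (einit e), F (Q ++ [e]) := by
  have hne : ∀ P ∈ paths A v, P ≠ [] := by
    intro P hP h
    subst h
    have hAv : A = v := (hpaths A v []).1 hP
    have : depth v = 0 := hAv ▸ hA
    omega
  rw [← Finset.sum_sigma (Finset.univ.filter (fun e => efin e = v))
      (fun e => paths A (einit e)) (fun x => F (x.2 ++ [x.1]))]
  refine (Finset.sum_bij' (s := paths A v)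
    (t := (Finset.univ.filter (fun e => efin e = v)).sigma (fun e => paths A (einit e)))
    (f := F) (g := fun x => F (x.2 ++ [x.1])) (fun P hP => (⟨P.getLast (hne P hP), P.dropLast⟩ : (_ : E) × List E))
    (fun x _ => x.2 ++ [x.1]) ?_ ?_ ?_ ?_ ?_)
  · intro P hP
    have h := (hpaths A v P).1 hP
    have hsplit : P.dropLast ++ [P.getLast (hne P hP)] = P := List.dropLast_append_getLast _
    rw [← hsplit, isPath_append_singleton] at h
    simp only [Finset.mem_sigma, Finset.mem_filter, Finset.mem_univ, true_and]
    exact ⟨h.2, (hpaths _ _ _).2 h.1⟩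
  · intro x hx
    simp only [Finset.mem_sigma, Finset.mem_filter, Finset.mem_univ, true_and] at hx
    exact (hpaths _ _ _).2 ((isPath_append_singleton _ _ _ _ _ _).2
      ⟨(hpaths _ _ _).1 hx.2, hx.1⟩)
  · intro P hP
    exact List.dropLast_append_getLast (hne P hP)
  · intro x hx
    obtain ⟨e, Q⟩ := x
    simp
  · intro P hP
    simp only []
    rw [List.dropLast_append_getLast (hne P hP)]

/-- **Mean-value joining formula** (Appendix B). Suppose the flow `α^(0)(u)` is nonzero
at every vertex, and define the forward mean `ᾱ(u) = α^(1)(u)/α^(0)(u)`. Then for a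
vertex `v` with `depth(v) ≥ 1`,
`ᾱ(v) = Σ_{e : fin(e) = v} (ᾱ(init(e)) + g(e)) ·
  (λ(e)·α^(0)(init(e)) / Σ_{e' : fin(e') = v} λ(e')·α^(0)(init(e')))`,
i.e. the forward mean at `v` is the average of the shifted incoming forward means,
weighted by the relative flows of the incoming edges. -/
theorem forward_mean_joining {V E : Type*} [Fintype V] [Fintype E] [DecidableEq V]
    (einit efin : E → V) (depth : V → ℕ) (n : ℕ)
    (hdepth : ∀ e, depth (efin e) = depth (einit e) + 1)
    (A : V) (hA : depth A = 0) (B : V) (hB : depth B = n)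
    (lam g : E → ℝ)
    (paths : V → V → Finset (List E))
    (hpaths : ∀ u v P, P ∈ paths u v ↔ IsPath einit efin u v P)
    (h0 : ∀ u, alphaNum lam g paths A 0 u ≠ 0)
    (v : V) (hv : 1 ≤ depth v) :
    alphaNum lam g paths A 1 v / alphaNum lam g paths A 0 v =
      ∑ e ∈ Finset.univ.filter (fun e => efin e = v),
        (alphaNum lam g paths A 1 (einit e) / alphaNum lam g paths A 0 (einit e) + g e) *
          (lam e * alphaNum lam g paths A 0 (einit e) /
            ∑ e' ∈ Finset.univ.filter (fun e' => efin e' = v),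
              lam e' * alphaNum lam g paths A 0 (einit e')) := by
  have hlam : ∀ (Q : List E) (e : E), pathLam lam (Q ++ [e]) = pathLam lam Q * lam e := by
    intro Q e; simp [pathLam]
  have hF : ∀ (Q : List E) (e : E), pathF g (Q ++ [e]) = pathF g Q + g e := by
    intro Q e; simp [pathF]
  have h0rec : alphaNum lam g paths A 0 v =
      ∑ e ∈ Finset.univ.filter (fun e => efin e = v),
        lam e * alphaNum lam g paths A 0 (einit e) := by
    rw [alphaNum, sum_paths_split einit efin depth hdepth A hA paths hpaths v hv]
    refine Finset.sum_congr rfl fun e _ => ?_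
    rw [alphaNum, Finset.mul_sum]
    refine Finset.sum_congr rfl fun Q _ => ?_
    simp [hlam, hF]; ring
  have h1rec : alphaNum lam g paths A 1 v =
      ∑ e ∈ Finset.univ.filter (fun e => efin e = v),
        (lam e * alphaNum lam g paths A 1 (einit e) +
          g e * (lam e * alphaNum lam g paths A 0 (einit e))) := by
    rw [alphaNum, sum_paths_split einit efin depth hdepth A hA paths hpaths v hv]
    refine Finset.sum_congr rfl fun e _ => ?_
    simp only [alphaNum, Finset.mul_sum, ← Finset.sum_add_distrib]
    refine Finset.sum_congr rfl fun Q _ => ?_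
    simp [hlam, hF]; ring
  rw [h1rec, ← h0rec, Finset.sum_div]
  refine Finset.sum_congr rfl fun e _ => ?_
  have h1 := h0 (einit e)
  have h2 := h0 v
  field_simp
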